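/- The area integrand satisfies the atomic condition: for every Borel probability measure μ on G(n,d), the matrix A(μ) := ∫_{G(n,d)} T dμ(T) (with T the orthogonal projection matrix onto the d-plane T) is symmetric positive semidefinite with trace d and satisfies dim Ker A(μ) ≤ n−d; moreover, if dim Ker A(μ) = n−d, then μ = δ_{T_0} for a single d-plane T_0 ∈ G(n,d). -/

import Mathlib

open MeasureTheory Filter Metric Set Topology ENNReal ProbabilityTheory
open scoped Matrix
open scoped RealInnerProductSpace

noncomputable section

attribute [local instance] Matrix.normedAddCommGroup Matrix.normedSpace

/-- Euclidean space `ℝⁿ`. -/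
abbrev E (n : ℕ) := EuclideanSpace ℝ (Fin n)

/-- Square `n × n` real matrices, `ℝⁿ ⊗ ℝⁿ`. -/
abbrev Mat (n : ℕ) := Matrix (Fin n) (Fin n) ℝ

instance matMeasurableSpace {n : ℕ} : MeasurableSpace (Mat n) :=
  inferInstanceAs (MeasurableSpace (Fin n → Fin n → ℝ))

instance matBorelSpace {n : ℕ} : BorelSpace (Mat n) :=
  inferInstanceAs (BorelSpace (Fin n → Fin n → ℝ))

/-- The Grassmannian `G(n,d)`, identified with the set of orthogonal projection
matrices of rank `d`: symmetric idempotent `n × n` matrices of trace `d`. -/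
def grassSet (n d : ℕ) : Set (Mat n) :=
  {T | T * T = T ∧ Tᵀ = T ∧ T.trace = (d : ℝ)}

/-- Inner (Hilbert-Schmidt) product of matrices, `A : B = tr (Aᵀ B)`. -/
def mdot {n : ℕ} (A B : Mat n) : ℝ := (Aᵀ * B).trace

/-- Action of a matrix on a vector of `ℝⁿ`. -/
def matVec {n : ℕ} (A : Mat n) (v : E n) : E n := Matrix.toEuclideanLin A v

/-- The `d`-plane (set of fixed points) associated to a projection matrix `T`. -/
def planeSet {n : ℕ} (T : Mat n) : Set (E n) := {y | matVec T y = y}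

/-- The matrix `B_F(x,T)` associated to an integrand `F`, defined by
`B_F(x,T) : L = F(x,T) (T : L) + ⟨d_T F(x,T), T^⊥ L T + (T^⊥ L T)ᵀ⟩`. -/
def BF {n : ℕ} (F : E n → Mat n → ℝ) (x : E n) (T : Mat n) : Mat n :=
  Matrix.of fun i j =>
    F x T * T i j +
      fderiv ℝ (F x) T
        ((1 - T) * Matrix.single i j (1 : ℝ) * T +
          ((1 - T) * Matrix.single i j (1 : ℝ) * T)ᵀ)

/-- The matrix `Dg(x)` of the differential of a vector field `g`. -/
def gradMat {n : ℕ} (g : E n → E n) (x : E n) : Mat n :=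
  Matrix.of fun i j => fderiv ℝ g x (EuclideanSpace.single j (1 : ℝ)) i

/-- The anisotropic first variation
`δ_F V (g) = ∫ [⟨d_x F(x,T), g x⟩ + B_F(x,T) : Dg(x)] dV(x,T)`. -/
def firstVar {n : ℕ} (F : E n → Mat n → ℝ) (V : Measure (E n × Mat n))
    (g : E n → E n) : ℝ :=
  ∫ p, (fderiv ℝ (fun y => F y p.2) p.1 (g p.1) +
    mdot (BF F p.1 p.2) (gradMat g p.1)) ∂V

/-- `F` is a `C¹` integrand on `Ω × G(n,d)` (via an ambient extension in the
Grassmannian variable). -/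
def IsC1 {n : ℕ} (F : E n → Mat n → ℝ) (Ω : Set (E n)) : Prop :=
  ContDiffOn ℝ 1 (fun p : E n × Mat n => F p.1 p.2) (Ω ×ˢ univ)

/-- Test vector fields: `g ∈ C¹_c(Ω, ℝⁿ)`. -/
def TestVF {n : ℕ} (Ω : Set (E n)) (g : E n → E n) : Prop :=
  ContDiff ℝ 1 g ∧ HasCompactSupport g ∧ tsupport g ⊆ Ω

/-- Sup norm of a vector field. -/
def supNorm {n : ℕ} (g : E n → E n) : ℝ := ⨆ x, ‖g x‖

/-- `δ_F V` is a Radon measure on the open set `Ω`, i.e. `V` has locally bounded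
anisotropic first variation: for every compact `K ⊆ Ω` there is `C` with
`|δ_F V (g)| ≤ C ‖g‖_∞` whenever `spt g ⊆ K`. -/
def HasBoundedFV {n : ℕ} (F : E n → Mat n → ℝ) (V : Measure (E n × Mat n))
    (Ω : Set (E n)) : Prop :=
  ∀ K : Set (E n), IsCompact K → K ⊆ Ω →
    ∃ C : ℝ, ∀ g : E n → E n, TestVF Ω g → tsupport g ⊆ K →
      |firstVar F V g| ≤ C * supNorm g

/-- `A_x(μ) = ∫ B_F(x,T) dμ(T)`. -/
def Ax {n : ℕ} (F : E n → Mat n → ℝ) (x : E n) (μ : Measure (Mat n)) : Mat n :=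
  ∫ T, BF F x T ∂μ

/-- Dimension of the kernel of (the linear map associated to) a matrix. -/
def kerDim {n : ℕ} (A : Mat n) : ℕ :=
  Module.finrank ℝ (LinearMap.ker (Matrix.toEuclideanLin A))

/-- The atomic condition (AC) for `F` at the point `x`:
(i) `dim Ker A_x(μ) ≤ n − d` for every probability measure `μ` on `G(n,d)`;
(ii) if `dim Ker A_x(μ) = n − d` then `μ` is a Dirac delta. -/
def AtomicCondition (n d : ℕ) (F : E n → Mat n → ℝ) (x : E n) : Prop :=
  ∀ μ : Measure (Mat n), IsProbabilityMeasure μ → μ (grassSet n d) = 1 →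
    kerDim (Ax F x μ) ≤ n - d ∧
      (kerDim (Ax F x μ) = n - d → ∃ T₀ ∈ grassSet n d, μ = Measure.dirac T₀)

/-- `ω_d`, the volume of the unit ball of `ℝ^d`. -/
def omegaBall (d : ℕ) : ℝ := (volume (ball (0 : E d) 1)).toReal

/-- The `d`-dimensional Hausdorff measure `ℋ^d` on `ℝⁿ`, with the standard
normalization (so that it agrees with Lebesgue measure on `d`-planes). -/
def hausdorff (n d : ℕ) : Measure (E n) :=
  ENNReal.ofReal (omegaBall d / 2 ^ d) • μH[(d : ℝ)]

/-- Lower `d`-dimensional density `Θ^d_*(x,μ)`. -/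
def lowerDensity {n : ℕ} (d : ℕ) (μ : Measure (E n)) (x : E n) : ℝ≥0∞ :=
  liminf (fun r : ℝ => μ (ball x r) / ENNReal.ofReal (omegaBall d * r ^ d)) (𝓝[>] 0)

/-- Upper `d`-dimensional density `Θ^{d*}(x,μ)`. -/
def upperDensity {n : ℕ} (d : ℕ) (μ : Measure (E n)) (x : E n) : ℝ≥0∞ :=
  limsup (fun r : ℝ => μ (ball x r) / ENNReal.ofReal (omegaBall d * r ^ d)) (𝓝[>] 0)

/-- The set of points of positive lower `d`-dimensional density. -/
def posDens {n : ℕ} (d : ℕ) (μ : Measure (E n)) : Set (E n) :=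
  {x | 0 < lowerDensity d μ x}

/-- The rescaled measure `μ_{x,r} = (η^{x,r}_# μ) ⌊ B₁ / μ(B_r(x))`. -/
def scaledMeasure {n : ℕ} (μ : Measure (E n)) (x : E n) (r : ℝ) : Measure (E n) :=
  (μ (ball x r))⁻¹ • ((μ.map fun y => r⁻¹ • (y - x)).restrict (ball 0 1))

/-- Weak-* convergence of a sequence of measures (tested on `C_c`). -/
def WeakStar {α : Type*} [TopologicalSpace α] [MeasurableSpace α]
    (μs : ℕ → Measure α) (σ : Measure α) : Prop :=
  ∀ f : α → ℝ, Continuous f → HasCompactSupport f →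
    Tendsto (fun j => ∫ y, f y ∂(μs j)) atTop (𝓝 (∫ y, f y ∂σ))

/-- `σ ∈ Tan(x,μ)`: tangent measures in the sense of Preiss. -/
def TangentMeasure {n : ℕ} (μ : Measure (E n)) (x : E n) (σ : Measure (E n)) : Prop :=
  ∃ r : ℕ → ℝ, (∀ j, 0 < r j) ∧ Tendsto r atTop (𝓝 0) ∧
    WeakStar (fun j => scaledMeasure μ x (r j)) σ

/-- The rescaled varifold `V_{x,r}`. -/
def scaledVarifold {n : ℕ} (V : Measure (E n × Mat n)) (x : E n) (r : ℝ) :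
    Measure (E n × Mat n) :=
  (V (ball x r ×ˢ (univ : Set (Mat n))))⁻¹ •
    ((V.map fun p => (r⁻¹ • (p.1 - x), p.2)).restrict (ball 0 1 ×ˢ univ))

/-- `W ∈ Tan(x,V)`: tangent varifolds. -/
def TangentVarifold {n : ℕ} (V : Measure (E n × Mat n)) (x : E n)
    (W : Measure (E n × Mat n)) : Prop :=
  ∃ r : ℕ → ℝ, (∀ j, 0 < r j) ∧ Tendsto r atTop (𝓝 0) ∧
    WeakStar (fun j => scaledVarifold V x (r j)) W

/-- A set `K ⊆ ℝⁿ` is `d`-rectifiable: up to an `ℋ^d`-null set it is covered by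
countably many `C¹` images of `ℝ^d`. -/
def IsRectifiableSet (n d : ℕ) (K : Set (E n)) : Prop :=
  ∃ f : ℕ → (E d → E n), (∀ j, ContDiff ℝ 1 (f j)) ∧
    hausdorff n d (K \ ⋃ j, range (f j)) = 0

/-- `T` is the approximate tangent plane of the `d`-rectifiable set `K` at `x`:
the blow-ups of `ℋ^d ⌊ K` at `x` converge weakly-* to `ℋ^d ⌊ T`. -/
def IsApproxTangentAt (n d : ℕ) (K : Set (E n)) (x : E n) (T : Mat n) : Prop :=
  ∀ f : E n → ℝ, Continuous f → HasCompactSupport f →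
    Tendsto (fun r : ℝ => (∫ y, f (r⁻¹ • (y - x)) ∂((hausdorff n d).restrict K)) / r ^ d)
      (𝓝[>] 0) (𝓝 (∫ y in planeSet T, f y ∂(hausdorff n d)))

/-- A `d`-varifold is `d`-rectifiable if it is of the form
`θ ℋ^d ⌊ K ⊗ δ_{T_x K}` for a `d`-rectifiable set `K` and a positive Borel
function `θ`. -/
def IsRectifiableVarifold (n d : ℕ) (V : Measure (E n × Mat n)) : Prop :=
  ∃ (K : Set (E n)) (θ : E n → ℝ≥0∞) (τ : E n → Mat n),
    IsRectifiableSet n d K ∧ Measurable θ ∧ Measurable τ ∧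
    (∀ x ∈ K, 0 < θ x ∧ θ x ≠ ⊤) ∧ (∀ x, τ x ∈ grassSet n d) ∧
    (∀ᵐ x ∂((hausdorff n d).restrict K), IsApproxTangentAt n d K x (τ x)) ∧
    V = Measure.map (fun x => (x, τ x)) (((hausdorff n d).restrict K).withDensity θ)



section AuxAC

variable {n d : ℕ}

lemma aux_grass_meas : MeasurableSet (grassSet n d) := by
  have h1 : IsClosed {T : Mat n | T * T = T} :=
    isClosed_eq (continuous_id.matrix_mul continuous_id) continuous_id
  have h2 : IsClosed {T : Mat n | Tᵀ = T} :=
    isClosed_eq continuous_id.matrix_transpose continuous_id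
  have h3 : IsClosed {T : Mat n | T.trace = (d : ℝ)} :=
    isClosed_eq continuous_id.matrix_trace continuous_const
  exact ((h1.inter (h2.inter h3))).measurableSet

lemma aux_grass_diag {T : Mat n} (hT : T ∈ grassSet n d) (i : Fin n) :
    T i i = ∑ k, (T k i)^2 := by
  obtain ⟨h1, h2, -⟩ := id hT
  have hsym : ∀ a b, T a b = T b a := by
    intro a b; conv_lhs => rw [← h2]
    rfl
  conv_lhs => rw [← h1]
  simp only [Matrix.mul_apply, sq]
  exact Finset.sum_congr rfl fun k _ => by rw [hsym i k]

lemma aux_grass_diag_nonneg {T : Mat n} (hT : T ∈ grassSet n d) (i : Fin n) : 0 ≤ T i i := by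
  rw [aux_grass_diag hT i]; positivity

lemma aux_grass_diag_le {T : Mat n} (hT : T ∈ grassSet n d) (i : Fin n) : T i i ≤ d := by
  have htr := hT.2.2
  rw [Matrix.trace] at htr
  calc T i i ≤ ∑ k, T k k :=
        Finset.single_le_sum (fun k _ => aux_grass_diag_nonneg hT k) (Finset.mem_univ i)
  _ = d := htr

lemma aux_grass_entry_bound {T : Mat n} (hT : T ∈ grassSet n d) (i j : Fin n) :
    |T i j| ≤ d := by
  obtain ⟨h1, h2, -⟩ := id hT
  have key : T i j = ∑ k, T k i * T k j := by
    have hsym : ∀ a b, T a b = T b a := by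
      intro a b; conv_lhs => rw [← h2]
      rfl
    conv_lhs => rw [← h1]
    simp only [Matrix.mul_apply]
    exact Finset.sum_congr rfl fun k _ => by rw [hsym i k]
  calc |T i j| = |∑ k, T k i * T k j| := by rw [key]
  _ ≤ ∑ k, |T k i * T k j| := Finset.abs_sum_le_sum_abs _ _
  _ ≤ ∑ k, ((T k i)^2 + (T k j)^2) / 2 := by
      refine Finset.sum_le_sum fun k _ => ?_
      rw [abs_mul]
      nlinarith [abs_nonneg (T k i), abs_nonneg (T k j), sq_abs (T k i), sq_abs (T k j),
        sq_nonneg (|T k i| - |T k j|)]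
  _ = (T i i + T j j) / 2 := by
      rw [← Finset.sum_div, Finset.sum_add_distrib, ← aux_grass_diag hT i, ← aux_grass_diag hT j]
  _ ≤ d := by
      have := aux_grass_diag_le hT i; have := aux_grass_diag_le hT j; linarith

lemma aux_proj_posSemidef {T : Mat n} (h1 : T * T = T) (h2 : Tᵀ = T) : T.PosSemidef := by
  have h : T = Tᴴ * T := by
    rw [Matrix.conjTranspose, show Tᵀ.map star = Tᵀ from by ext; simp, h2, h1]
  rw [h]
  exact Matrix.posSemidef_conjTranspose_mul_self T

lemma aux_proj_compl {T : Mat n} (h1 : T * T = T) (h2 : Tᵀ = T) :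
    (1 - T) * (1 - T) = 1 - T ∧ (1 - T)ᵀ = 1 - T := by
  constructor
  · rw [sub_mul, one_mul, mul_sub, mul_one, h1]
    abel
  · rw [Matrix.transpose_sub, Matrix.transpose_one, h2]

instance matContENorm {n : ℕ} : ContinuousENorm (Mat n) := SeminormedAddGroup.toContinuousENorm

instance matOpensMeas {n : ℕ} :
    @OpensMeasurableSpace (Mat n) (PseudoMetricSpace.toUniformSpace).toTopologicalSpace _ :=
  inferInstanceAs (OpensMeasurableSpace (Fin n → Fin n → ℝ))

/-- `M ↦ M i j` as a continuous linear map. -/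
def entryCLM (i j : Fin n) : Mat n →L[ℝ] ℝ :=
  LinearMap.toContinuousLinearMap
    { toFun := fun M : Mat n => M i j
      map_add' := fun _ _ => rfl
      map_smul' := fun _ _ => rfl }

@[simp] lemma entryCLM_apply (i j : Fin n) (T : Mat n) : entryCLM i j T = T i j := rfl

/-- `M ↦ x ⬝ᵥ M *ᵥ x` as a continuous linear map. -/
def quadCLM (x : Fin n → ℝ) : Mat n →L[ℝ] ℝ :=
  LinearMap.toContinuousLinearMap
    { toFun := fun M : Mat n => x ⬝ᵥ (M *ᵥ x)
      map_add' := fun M N => by simp [Matrix.add_mulVec, dotProduct_add]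
      map_smul' := fun c M => by
        simp [Matrix.smul_mulVec, dotProduct_smul] }

@[simp] lemma quadCLM_apply (x : Fin n → ℝ) (M : Mat n) : quadCLM x M = x ⬝ᵥ (M *ᵥ x) := rfl

lemma aux_kerDim_add_rank (A : Mat n) : kerDim A + A.rank = n := by
  have h1 : A.rank = Module.finrank ℝ (LinearMap.range (Matrix.toEuclideanLin A)) := by
    rw [Matrix.toEuclideanLin_eq_toLin]
    exact A.rank_eq_finrank_range_toLin (PiLp.basisFun 2 ℝ (Fin n)) (PiLp.basisFun 2 ℝ (Fin n))
  have h2 := LinearMap.finrank_range_add_finrank_ker (Matrix.toEuclideanLin A)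
  rw [finrank_euclideanSpace_fin] at h2
  rw [kerDim, h1]
  omega

lemma aux_trace_eq_sum_eigenvalues (A : Mat n) (hA : A.IsHermitian) :
    A.trace = ∑ i, hA.eigenvalues i := by
  conv_lhs => rw [hA.spectral_theorem, Unitary.conjStarAlgAut_apply]
  rw [Matrix.trace_mul_cycle]
  rw [show (star (hA.eigenvectorUnitary : Mat n) : Mat n) * (hA.eigenvectorUnitary : Mat n) = 1 from
    Matrix.mem_unitaryGroup_iff'.mp hA.eigenvectorUnitary.2]
  rw [one_mul, Matrix.trace_diagonal]
  simp

lemma aux_eigenvalue_le_one (A : Mat n) (hA : A.IsHermitian) (h1 : (1 - A).PosSemidef)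
    (i : Fin n) : hA.eigenvalues i ≤ 1 := by
  set v : EuclideanSpace ℝ (Fin n) := hA.eigenvectorBasis i with hv
  have hnorm : star (⇑v) ⬝ᵥ ⇑v = 1 := by
    have h : ‖v‖ = 1 := hA.eigenvectorBasis.orthonormal.1 i
    have h2 : (inner ℝ v v : ℝ) = 1 := by
      rw [real_inner_self_eq_norm_sq, h]; norm_num
    rw [← h2, EuclideanSpace.inner_eq_star_dotProduct, dotProduct_comm]
  have hq := h1.dotProduct_mulVec_nonneg (⇑v)
  have heig := hA.eigenvalues_eq i
  rw [Matrix.sub_mulVec, Matrix.one_mulVec, dotProduct_sub, hnorm] at hq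
  simp only [RCLike.re_to_real] at heig
  rw [heig]
  linarith [hq]

lemma aux_idem_of_eigs (A : Mat n) (hA : A.IsHermitian)
    (h01 : ∀ i, hA.eigenvalues i = 0 ∨ hA.eigenvalues i = 1) : A * A = A := by
  set D : Mat n := Matrix.diagonal ((RCLike.ofReal : ℝ → ℝ) ∘ hA.eigenvalues) with hDdef
  have hU' : (star (hA.eigenvectorUnitary : Mat n) : Mat n) * (hA.eigenvectorUnitary : Mat n) = 1 :=
    Matrix.mem_unitaryGroup_iff'.mp hA.eigenvectorUnitary.2
  have hD : D * D = D := by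
    have hfun : (fun i => ((RCLike.ofReal : ℝ → ℝ) ∘ hA.eigenvalues) i *
        ((RCLike.ofReal : ℝ → ℝ) ∘ hA.eigenvalues) i)
        = ((RCLike.ofReal : ℝ → ℝ) ∘ hA.eigenvalues) := by
      funext i
      rcases h01 i with h | h <;> simp [h]
    rw [hDdef, Matrix.diagonal_mul_diagonal, hfun]
  conv_lhs => rw [hA.spectral_theorem, Unitary.conjStarAlgAut_apply]
  conv_rhs => rw [hA.spectral_theorem, Unitary.conjStarAlgAut_apply]
  calc _ = (hA.eigenvectorUnitary : Mat n) * D *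
      ((star (hA.eigenvectorUnitary : Mat n) : Mat n) * (hA.eigenvectorUnitary : Mat n)) *
      D * (star (hA.eigenvectorUnitary : Mat n) : Mat n) := by
        noncomm_ring
  _ = _ := by rw [hU']; noncomm_ring [hD]

end AuxAC

/-- The area integrand `F ≡ 1` satisfies the atomic condition: for every Borel
probability measure `μ` on `G(n,d)`, the matrix `A(μ) = ∫ T dμ(T)` is symmetric
positive semidefinite with trace `d` and `dim Ker A(μ) ≤ n − d`; if
`dim Ker A(μ) = n − d` then `μ` is a Dirac delta at a single `d`-plane. -/
theorem statement15 (n d : ℕ) (hdn : d ≤ n) (μ : Measure (Mat n))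
    [IsProbabilityMeasure μ] (hμ : μ (grassSet n d) = 1) :
    (∫ T, T ∂μ)ᵀ = (∫ T, T ∂μ) ∧
    Matrix.PosSemidef (∫ T, T ∂μ) ∧
    (∫ T, T ∂μ).trace = (d : ℝ) ∧
    kerDim (∫ T, T ∂μ) ≤ n - d ∧
    (kerDim (∫ T, T ∂μ) = n - d → ∃ T₀ ∈ grassSet n d, μ = Measure.dirac T₀) := by
  have hmeas : MeasurableSet (grassSet n d) := aux_grass_meas
  have hae : ∀ᵐ T ∂μ, T ∈ grassSet n d := by
    have h0 : μ (grassSet n d)ᶜ = 0 := (prob_compl_eq_zero_iff hmeas).mpr hμ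
    rw [ae_iff]; exact h0
  have hint_entry : ∀ i j : Fin n, Integrable (fun T : Mat n => T i j) μ := by
    intro i j
    refine Integrable.mono' (integrable_const (d : ℝ)) ?_ ?_
    · exact ((continuous_apply j).comp (continuous_apply i)).aestronglyMeasurable
    · filter_upwards [hae] with T hT
      simpa [Real.norm_eq_abs] using aux_grass_entry_bound hT i j
  have hint : Integrable (fun T : Mat n => T) μ := by
    refine Integrable.mono' (integrable_const (d : ℝ))
      (@continuous_id (Mat n) (PseudoMetricSpace.toUniformSpace).toTopologicalSpace).aestronglyMeasurable ?_
    filter_upwards [hae] with T hT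
    rw [Matrix.norm_le_iff (by positivity)]
    intro i j
    simpa [Real.norm_eq_abs] using aux_grass_entry_bound hT i j
  set A : Mat n := ∫ T, T ∂μ with hAdef
  have hentry : ∀ i j : Fin n, A i j = ∫ T, T i j ∂μ := by
    intro i j
    have := (entryCLM (n := n) i j).integral_comp_comm hint
    exact this.symm
  -- symmetry
  have hsymm : Aᵀ = A := by
    ext i j
    show A j i = A i j
    rw [hentry j i, hentry i j]
    refine integral_congr_ae ?_
    filter_upwards [hae] with T hT
    exact congrFun (congrFun hT.2.1 i) j
  -- trace
  have htrace : A.trace = (d : ℝ) := by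
    have h1 : A.trace = ∑ i, ∫ T, T i i ∂μ := by
      rw [Matrix.trace]
      exact Finset.sum_congr rfl fun i _ => hentry i i
    rw [h1, ← integral_finset_sum _ (fun i _ => hint_entry i i)]
    have h2 : ∫ T, (∑ i, T i i) ∂μ = ∫ _T, (d : ℝ) ∂μ := by
      refine integral_congr_ae ?_
      filter_upwards [hae] with T hT
      simpa [Matrix.trace, Matrix.diag] using hT.2.2
    rw [h2, integral_const]
    simp
  -- hermitian
  have hherm : A.IsHermitian := by
    rw [Matrix.IsHermitian, Matrix.conjTranspose, show Aᵀ.map star = Aᵀ from by ext; simp]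
    exact hsymm
  -- quadratic form
  have hquad : ∀ x : Fin n → ℝ, x ⬝ᵥ (A *ᵥ x) = ∫ T, x ⬝ᵥ (T *ᵥ x) ∂μ := by
    intro x
    have := (quadCLM (n := n) x).integral_comp_comm hint
    exact this.symm
  have hquad_int : ∀ x : Fin n → ℝ, Integrable (fun T : Mat n => x ⬝ᵥ (T *ᵥ x)) μ := by
    intro x
    exact (quadCLM (n := n) x).integrable_comp hint
  have hpsd : A.PosSemidef := by
    refine Matrix.PosSemidef.of_dotProduct_mulVec_nonneg hherm fun x => ?_
    have hsx : star x = x := by funext k; simp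
    rw [hsx, hquad x]
    refine integral_nonneg_of_ae ?_
    filter_upwards [hae] with T hT
    have := (aux_proj_posSemidef hT.1 hT.2.1).dotProduct_mulVec_nonneg x
    rwa [show star x = x from by funext k; simp] at this
  -- 1 - A is PSD
  have h1psd : (1 - A).PosSemidef := by
    refine Matrix.PosSemidef.of_dotProduct_mulVec_nonneg ?_ ?_
    · exact Matrix.isHermitian_one.sub hherm
    · intro x
      have hsx : star x = x := by funext k; simp
      rw [hsx, Matrix.sub_mulVec, Matrix.one_mulVec, dotProduct_sub, sub_nonneg, hquad x]
      have hle : ∀ᵐ T ∂μ, x ⬝ᵥ (T *ᵥ x) ≤ x ⬝ᵥ x := by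
        filter_upwards [hae] with T hT
        obtain ⟨hc1, hc2⟩ := aux_proj_compl hT.1 hT.2.1
        have := (aux_proj_posSemidef hc1 hc2).dotProduct_mulVec_nonneg x
        rw [show star x = x from by funext k; simp, Matrix.sub_mulVec, Matrix.one_mulVec,
          dotProduct_sub, sub_nonneg] at this
        exact this
      calc ∫ T, x ⬝ᵥ (T *ᵥ x) ∂μ ≤ ∫ _T, x ⬝ᵥ x ∂μ :=
            integral_mono_ae (hquad_int x) (integrable_const _) hle
      _ = x ⬝ᵥ x := by rw [integral_const]; simp
  -- eigenvalues
  have hsum : ∑ i, hherm.eigenvalues i = (d : ℝ) := by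
    rw [← aux_trace_eq_sum_eigenvalues A hherm, htrace]
  have hnn : ∀ i, 0 ≤ hherm.eigenvalues i := fun i => hpsd.eigenvalues_nonneg i
  have hle1 : ∀ i, hherm.eigenvalues i ≤ 1 := aux_eigenvalue_le_one A hherm h1psd
  have hcard : A.rank = (Finset.univ.filter fun i => hherm.eigenvalues i ≠ 0).card := by
    rw [hherm.rank_eq_card_non_zero_eigs, Fintype.card_subtype]
  have hfilt : ∑ i ∈ Finset.univ.filter (fun i => hherm.eigenvalues i ≠ 0), hherm.eigenvalues i
      = (d : ℝ) := by
    rw [Finset.sum_filter_ne_zero, hsum]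
  have hrank_ge : d ≤ A.rank := by
    have hb : (d : ℝ) ≤ (A.rank : ℝ) := by
      rw [hcard, ← hfilt]
      calc ∑ i ∈ Finset.univ.filter (fun i => hherm.eigenvalues i ≠ 0), hherm.eigenvalues i
          ≤ (Finset.univ.filter fun i => hherm.eigenvalues i ≠ 0).card • (1 : ℝ) :=
            Finset.sum_le_card_nsmul _ _ 1 (fun i _ => hle1 i)
      _ = _ := by simp
    exact_mod_cast hb
  have hkr := aux_kerDim_add_rank A
  refine ⟨hsymm, hpsd, htrace, by omega, ?_⟩
  -- equality case
  intro hker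
  have hrank : A.rank = d := by omega
  have h01 : ∀ i, hherm.eigenvalues i = 0 ∨ hherm.eigenvalues i = 1 := by
    by_contra hcon
    push_neg at hcon
    obtain ⟨i₀, hi0, hi1⟩ := hcon
    have hi_mem : i₀ ∈ Finset.univ.filter (fun i => hherm.eigenvalues i ≠ 0) := by
      simp [hi0]
    have hlt : ∑ i ∈ Finset.univ.filter (fun i => hherm.eigenvalues i ≠ 0), hherm.eigenvalues i
        < ∑ _i ∈ Finset.univ.filter (fun i => hherm.eigenvalues i ≠ 0), (1 : ℝ) :=
      Finset.sum_lt_sum (fun i _ => hle1 i) ⟨i₀, hi_mem, lt_of_le_of_ne (hle1 i₀) hi1⟩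
    rw [hfilt, Finset.sum_const, ← hcard, hrank] at hlt
    simp at hlt
  have hAA : A * A = A := aux_idem_of_eigs A hherm h01
  have hAgrass : A ∈ grassSet n d := ⟨hAA, hsymm, htrace⟩
  -- second moments
  have hint_sq : ∀ i j : Fin n, Integrable (fun T : Mat n => (T i j)^2) μ := by
    intro i j
    refine Integrable.mono' (integrable_const ((d : ℝ)^2)) ?_ ?_
    · exact (((continuous_apply j).comp (continuous_apply i)).pow 2).aestronglyMeasurable
    · filter_upwards [hae] with T hT
      have h := aux_grass_entry_bound hT i j
      have h0 : (0:ℝ) ≤ d := le_trans (abs_nonneg _) h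
      rw [Real.norm_eq_abs, abs_pow]
      calc |T i j|^2 ≤ (d : ℝ)^2 := by nlinarith [abs_nonneg (T i j)]
      _ ≤ (d : ℝ)^2 := le_refl _
  have hsum_sq : ∀ᵐ T ∂μ, T ∈ grassSet n d → (∑ i, ∑ j, (T i j)^2) = (d : ℝ) := by
    filter_upwards with T hT
    have : ∀ j, ∑ i, (T i j)^2 = T j j := fun j => (aux_grass_diag hT j).symm
    rw [Finset.sum_comm]
    calc ∑ j, ∑ i, (T i j)^2 = ∑ j, T j j := Finset.sum_congr rfl fun j _ => this j
    _ = (d : ℝ) := hT.2.2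
  have hA_sq : (∑ i, ∑ j, (A i j)^2) = (d : ℝ) := by
    have : ∀ j, ∑ i, (A i j)^2 = A j j := fun j => (aux_grass_diag hAgrass j).symm
    rw [Finset.sum_comm]
    calc ∑ j, ∑ i, (A i j)^2 = ∑ j, A j j := Finset.sum_congr rfl fun j _ => this j
    _ = (d : ℝ) := hAgrass.2.2
  have hint_dev : ∀ i j : Fin n, Integrable (fun T : Mat n => (T i j - A i j)^2) μ := by
    intro i j
    have : (fun T : Mat n => (T i j - A i j)^2)
        = fun T : Mat n => (T i j)^2 - (2 * A i j) * T i j + (A i j)^2 := by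
      funext T; ring
    rw [this]
    have ia : Integrable (fun T : Mat n => T i j ^ 2 - 2 * A i j * T i j) μ :=
      (hint_sq i j).sub ((hint_entry i j).const_mul _)
    exact ia.add (integrable_const _)
  have hdev_val : ∀ i j : Fin n,
      ∫ T, (T i j - A i j)^2 ∂μ = (∫ T, (T i j)^2 ∂μ) - (A i j)^2 := by
    intro i j
    have h1 : (fun T : Mat n => (T i j - A i j)^2)
        = fun T : Mat n => (T i j)^2 - (2 * A i j) * T i j + (A i j)^2 := by
      funext T; ring
    have ia : Integrable (fun T : Mat n => T i j ^ 2 - 2 * A i j * T i j) μ :=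
      (hint_sq i j).sub ((hint_entry i j).const_mul _)
    have ib : Integrable (fun T : Mat n => (2 * A i j) * T i j) μ :=
      (hint_entry i j).const_mul _
    rw [h1, integral_add ia (integrable_const _),
      integral_sub (hint_sq i j) ib,
      MeasureTheory.integral_const_mul, ← hentry i j, integral_const]
    simp only [probReal_univ, ENNReal.toReal_one, smul_eq_mul, one_mul]
    ring
  have hsum_int_sq : (∑ i, ∑ j, ∫ T, (T i j)^2 ∂μ) = (d : ℝ) := by
    have h1 : ∀ i : Fin n, (∑ j, ∫ T, (T i j)^2 ∂μ) = ∫ T, (∑ j, (T i j)^2) ∂μ := by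
      intro i
      exact (integral_finset_sum _ (fun j _ => hint_sq i j)).symm
    calc (∑ i, ∑ j, ∫ T, (T i j)^2 ∂μ) = ∑ i, ∫ T, (∑ j, (T i j)^2) ∂μ :=
          Finset.sum_congr rfl fun i _ => h1 i
    _ = ∫ T, (∑ i, ∑ j, (T i j)^2) ∂μ :=
          (integral_finset_sum _ (fun i _ =>
            integrable_finset_sum _ (fun j _ => hint_sq i j))).symm
    _ = ∫ _T, (d : ℝ) ∂μ := by
          refine integral_congr_ae ?_
          filter_upwards [hae, hsum_sq] with T hT h2
          exact h2 hT
    _ = (d : ℝ) := by rw [integral_const]; simp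
  have hdev_sum : (∑ i, ∑ j, ∫ T, (T i j - A i j)^2 ∂μ) = 0 := by
    calc (∑ i, ∑ j, ∫ T, (T i j - A i j)^2 ∂μ)
        = (∑ i, ∑ j, ((∫ T, (T i j)^2 ∂μ) - (A i j)^2)) := by
          exact Finset.sum_congr rfl fun i _ => Finset.sum_congr rfl fun j _ => hdev_val i j
    _ = (∑ i, ∑ j, ∫ T, (T i j)^2 ∂μ) - (∑ i, ∑ j, (A i j)^2) := by
          rw [← Finset.sum_sub_distrib]
          exact Finset.sum_congr rfl fun i _ => by rw [Finset.sum_sub_distrib]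
    _ = 0 := by rw [hsum_int_sq, hA_sq]; ring
  have hdev_nonneg : ∀ i j : Fin n, 0 ≤ ∫ T, (T i j - A i j)^2 ∂μ := by
    intro i j
    exact integral_nonneg fun T => sq_nonneg _
  have hdev_zero : ∀ i j : Fin n, ∫ T, (T i j - A i j)^2 ∂μ = 0 := by
    intro i j
    have houter := (Finset.sum_eq_zero_iff_of_nonneg
      (fun i _ => Finset.sum_nonneg fun j _ => hdev_nonneg i j)).mp hdev_sum i (Finset.mem_univ i)
    exact (Finset.sum_eq_zero_iff_of_nonneg (fun j _ => hdev_nonneg i j)).mp houter j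
      (Finset.mem_univ j)
  have hae_eq : ∀ᵐ T ∂μ, T = A := by
    have h1 : ∀ i j : Fin n, ∀ᵐ T ∂μ, T i j = A i j := by
      intro i j
      have h2 := (integral_eq_zero_iff_of_nonneg (fun T => sq_nonneg ((T : Mat n) i j - A i j))
        (hint_dev i j)).mp (hdev_zero i j)
      filter_upwards [h2] with T hT
      have : (T i j - A i j)^2 = 0 := hT
      have := pow_eq_zero_iff (n := 2) (by norm_num) |>.mp this
      linarith [this]
    have h3 : ∀ᵐ T ∂μ, ∀ i j : Fin n, T i j = A i j := by
      rw [ae_all_iff]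
      intro i
      rw [ae_all_iff]
      exact h1 i
    filter_upwards [h3] with T hT
    funext i j
    exact hT i j
  refine ⟨A, hAgrass, ?_⟩
  have hsingle : MeasurableSet ({A} : Set (Mat n)) := measurableSet_singleton A
  have hcompl : μ ({A} : Set (Mat n))ᶜ = 0 := by
    rw [← compl_compl ({A} : Set (Mat n))] at hsingle
    have : {T : Mat n | ¬ T = A} = ({A} : Set (Mat n))ᶜ := by
      ext T; simp [Set.mem_compl_iff]
    rw [← this]
    exact hae_eq
  have hA1 : μ ({A} : Set (Mat n)) = 1 := by
    have h := measure_compl hsingle (measure_ne_top μ _)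
    rw [hcompl, measure_univ] at h
    have hge : 1 ≤ μ ({A} : Set (Mat n)) := tsub_eq_zero_iff_le.mp h.symm
    exact le_antisymm prob_le_one hge
  ext s hs
  rw [Measure.dirac_apply' _ hs]
  by_cases hAs : A ∈ s
  · have hub : μ s ≤ 1 := prob_le_one
    have hlb : μ ({A} : Set (Mat n)) ≤ μ s := measure_mono (Set.singleton_subset_iff.mpr hAs)
    rw [hA1] at hlb
    rw [Set.indicator_of_mem hAs]
    exact le_antisymm hub hlb
  · have hsub : s ⊆ ({A} : Set (Mat n))ᶜ := by
      intro T hTs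
      simp only [Set.mem_compl_iff, Set.mem_singleton_iff]
      rintro rfl
      exact hAs hTs
    rw [Set.indicator_of_notMem hAs]
    exact measure_mono_null hsub hcompl

end
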